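/- Let G and H be Left dead-ends. Then G ≥ H (in the dead-end order) if and only if the misère outcome of G° + H is at most P, i.e. Left moving first loses G° + H. -/
import Mathlib


/-- A (finite) partizan game: finite lists of Left and Right options. -/
inductive Gm : Type where
  | node : List Gm → List Gm → Gm

/-- The Left options of a game. -/
def Gm.leftOpts : Gm → List Gm
  | .node l _ => l

/-- The Right options of a game. -/
def Gm.rightOpts : Gm → List Gm
  | .node _ r => r

/-- Disjunctive sum of games. -/
def Gm.add : Gm → Gm → Gm
  | .node gl gr, .node hl hr =>
      .node
        (gl.attach.map (fun g => Gm.add g.1 (.node hl hr)) ++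
         hl.attach.map (fun h => Gm.add (.node gl gr) h.1))
        (gr.attach.map (fun g => Gm.add g.1 (.node hl hr)) ++
         hr.attach.map (fun h => Gm.add (.node gl gr) h.1))
termination_by g h => sizeOf g + sizeOf h
decreasing_by
  all_goals first
  | (have := List.sizeOf_lt_of_mem g.2; simp; omega)
  | (have := List.sizeOf_lt_of_mem h.2; simp; omega)

mutual
/-- Left, moving first, wins `G` under misère play (a player unable to move wins):
`G` is a Left end, or some Left option is a loss for Right moving first. -/
def Gm.lwins : Gm → Prop
  | .node l _ => l = [] ∨ ∃ g ∈ l.attach, ¬ Gm.rwins g.1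
termination_by G => sizeOf G
decreasing_by have := List.sizeOf_lt_of_mem g.2; simp; omega

/-- Right, moving first, wins `G` under misère play. -/
def Gm.rwins : Gm → Prop
  | .node _ r => r = [] ∨ ∃ g ∈ r.attach, ¬ Gm.lwins g.1
termination_by G => sizeOf G
decreasing_by have := List.sizeOf_lt_of_mem g.2; simp; omega
end

/-- The game `0`. -/
def Gm.zero : Gm := .node [] []

/-- The game `* = {0|0}`. -/
def Gm.star : Gm := .node [Gm.zero] [Gm.zero]

/-- The misère adjoint `G°`. -/
def Gm.adj : Gm → Gm
  | .node [] [] => Gm.star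
  | .node [] (r :: rs) => .node ((r :: rs).attach.map (fun g => Gm.adj g.1)) [Gm.zero]
  | .node (l :: ls) [] => .node [Gm.zero] ((l :: ls).attach.map (fun g => Gm.adj g.1))
  | .node (l :: ls) (r :: rs) =>
      .node ((r :: rs).attach.map (fun g => Gm.adj g.1))
            ((l :: ls).attach.map (fun g => Gm.adj g.1))
termination_by G => sizeOf G
decreasing_by
  all_goals (have := List.sizeOf_lt_of_mem g.2; simp at this ⊢; omega)

/-- `G` is a Left dead-end: `G` has no Left options, and every subposition
likewise has no Left options. -/
inductive Gm.IsLDE : Gm → Prop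
  | mk (r : List Gm) : (∀ g ∈ r, Gm.IsLDE g) → Gm.IsLDE (.node [] r)

/-- The dead-end order on Left dead-ends: `G ≥ H` iff every Right option of `G`
is `≥` some Right option of `H`, and `G` having no Right options implies the
same of `H`. -/
def Gm.DGe : Gm → Gm → Prop
  | .node _ gr, .node _ hr =>
      (∀ g ∈ gr, ∃ h ∈ hr, Gm.DGe g h) ∧ (gr = [] → hr = [])
termination_by G _ => sizeOf G
decreasing_by
  have := List.sizeOf_lt_of_mem ‹g ∈ gr›; simp; omega


open Gm in
theorem Gm.add_def (gl gr hl hr : List Gm) :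
    Gm.add (.node gl gr) (.node hl hr) =
      .node
        (gl.attach.map (fun g => Gm.add g.1 (.node hl hr)) ++
         hl.attach.map (fun h => Gm.add (.node gl gr) h.1))
        (gr.attach.map (fun g => Gm.add g.1 (.node hl hr)) ++
         hr.attach.map (fun h => Gm.add (.node gl gr) h.1)) := by
  rw [Gm.add]

theorem Gm.lwins_def (l r : List Gm) :
    Gm.lwins (.node l r) ↔ (l = [] ∨ ∃ g ∈ l, ¬ Gm.rwins g) := by
  rw [Gm.lwins]
  simp

theorem Gm.rwins_def (l r : List Gm) :
    Gm.rwins (.node l r) ↔ (r = [] ∨ ∃ g ∈ r, ¬ Gm.lwins g) := by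
  rw [Gm.rwins]
  simp

theorem Gm.DGe_def (gl gr hl hr : List Gm) :
    Gm.DGe (.node gl gr) (.node hl hr) ↔
      ((∀ g ∈ gr, ∃ h ∈ hr, Gm.DGe g h) ∧ (gr = [] → hr = [])) := by
  rw [Gm.DGe]
theorem Gm.lwins_add_lde (A B : Gm) (hA : A.IsLDE) (hB : B.IsLDE) : Gm.lwins (A.add B) := by
  obtain ⟨ar, _⟩ := hA; obtain ⟨br, _⟩ := hB
  rw [Gm.add_def, Gm.lwins_def]
  simp

theorem Gm.rwins_zero_add (hr : List Gm) (hH : ∀ h ∈ hr, Gm.IsLDE h) :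
    Gm.rwins (Gm.zero.add (.node [] hr)) ↔ hr = [] := by
  rw [Gm.zero, Gm.add_def, Gm.rwins_def]
  simp only [List.attach_nil, List.map_nil, List.nil_append, List.map_eq_nil_iff,
    List.attach_eq_nil_iff, List.mem_map, List.mem_attach, true_and, Subtype.exists]
  constructor
  · rintro (h | ⟨x, ⟨h, hm, rfl⟩, hx⟩)
    · exact h
    · exact absurd (Gm.lwins_add_lde _ _ ⟨[], by simp⟩ (hH h hm)) hx
  · intro h; exact Or.inl h
theorem Gm.adj_shape (r : List Gm) :
    ∃ L, Gm.adj (.node [] r) = .node L [Gm.zero] := by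
  match r with
  | [] => exact ⟨[Gm.zero], by rw [Gm.adj]; rfl⟩
  | r0 :: rs => exact ⟨_, by rw [Gm.adj]⟩

theorem Gm.adj_cons (r0 : Gm) (rs : List Gm) :
    Gm.adj (.node [] (r0 :: rs)) =
      .node ((r0 :: rs).attach.map (fun g => Gm.adj g.1)) [Gm.zero] := by
  rw [Gm.adj]
theorem Gm.rwins_adjlike_add (L hr : List Gm) (hH : ∀ h ∈ hr, Gm.IsLDE h) :
    Gm.rwins ((Gm.node L [Gm.zero]).add (.node [] hr)) ↔
      ∃ h ∈ hr, ¬ Gm.lwins ((Gm.node L [Gm.zero]).add h) := by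
  rw [Gm.add_def, Gm.rwins_def]
  simp only [List.attach_cons, List.attach_nil, List.map_nil, List.map_cons,
    List.cons_append, List.nil_append, List.mem_cons, List.mem_map, List.mem_attach,
    true_and, Subtype.exists]
  constructor
  · rintro (h | ⟨x, (rfl | ⟨h, hm, rfl⟩), hx⟩)
    · simp at h
    · exact absurd (Gm.lwins_add_lde _ _ ⟨[], by simp⟩ ⟨hr, hH⟩) hx
    · exact ⟨h, hm, hx⟩
  · rintro ⟨h, hm, hx⟩
    exact Or.inr ⟨_, Or.inr ⟨h, hm, rfl⟩, hx⟩
theorem Gm.main (G H : Gm) (hG : G.IsLDE) (hH : H.IsLDE) :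
    Gm.DGe G H ↔ ¬ Gm.lwins (G.adj.add H) := by
  obtain ⟨gr, hgr⟩ := hG
  obtain ⟨hr, hhr⟩ := hH
  -- key fact for each right option g of G
  have key : ∀ g ∈ gr, (Gm.rwins (g.adj.add (.node [] hr)) ↔ ∃ h ∈ hr, Gm.DGe g h) := by
    intro g hg
    have hgl := hgr g hg
    obtain ⟨r, hrl⟩ := hgl
    obtain ⟨L, hL⟩ := Gm.adj_shape r
    rw [hL, Gm.rwins_adjlike_add L hr hhr]
    constructor
    · rintro ⟨h, hm, hx⟩
      refine ⟨h, hm, ?_⟩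
      rw [Gm.main (.node [] r) h ⟨r, hrl⟩ (hhr h hm), hL]
      exact hx
    · rintro ⟨h, hm, hx⟩
      refine ⟨h, hm, ?_⟩
      rw [← hL]
      exact (Gm.main (.node [] r) h ⟨r, hrl⟩ (hhr h hm)).mp hx
  match gr, hgr with
  | [], _ =>
    rw [Gm.DGe_def]
    have : Gm.adj (.node [] []) = Gm.node [Gm.zero] [Gm.zero] := by rw [Gm.adj]; rfl
    rw [this, Gm.add_def, Gm.lwins_def]
    simp only [List.attach_cons, List.attach_nil, List.map_nil, List.map_cons,
      List.cons_append, List.nil_append, List.mem_cons, List.not_mem_nil, or_false,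
      List.cons_ne_nil, false_or, exists_eq_left, not_not, implies_true, true_and,
      List.forall_mem_ne', forall_const, List.mem_singleton]
    rw [Gm.rwins_zero_add hr hhr]
    simp
  | g0 :: gs, hgr =>
    rw [Gm.DGe_def, Gm.adj_cons, Gm.add_def, Gm.lwins_def]
    simp only [List.cons_ne_self, false_implies, and_true, List.attach_nil, List.map_nil,
      List.append_nil, List.map_eq_nil_iff, List.attach_eq_nil_iff, List.mem_map,
      List.mem_attach, true_and, Subtype.exists]
    push_neg
    constructor
    · rintro ⟨h1, -⟩
      refine ⟨by simp, ?_⟩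
      rintro g ⟨a, ⟨g1, hg1, rfl⟩, rfl⟩
      rw [key g1 hg1]; exact h1 g1 hg1
    · rintro ⟨-, h2⟩
      refine ⟨fun g hg => ?_, by simp⟩
      rw [← key g hg]
      exact h2 _ ⟨g.adj, ⟨g, hg, rfl⟩, rfl⟩
termination_by sizeOf G + sizeOf H
decreasing_by
  all_goals
    (have h1 := List.sizeOf_lt_of_mem hg; have h2 := List.sizeOf_lt_of_mem hm; simp at h1 h2 ⊢; omega)
/-- for Left dead-ends `G` and `H`, `G ≥ H` in the dead-end order
iff Left moving first loses `G° + H` under misère play. -/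
theorem stmt12 (G H : Gm) (hG : G.IsLDE) (hH : H.IsLDE) :
    Gm.DGe G H ↔ ¬ Gm.lwins (G.adj.add H) := by
  exact Gm.main G H hG hH
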